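/- Let d ≥ 1, m ≥ 0, let ρ be any d×d complex matrix and let O₁,…,O_n (n ≥ 1) be d×d complex matrices. Then Tr(ρ^{⊗m} · λ_m(O₁) · λ_m(O₂) ⋯ λ_m(O_n)) = Σ_{f : {1,…,n} → {1,…,m}} ∏_{k=1}^m Tr(ρ · ∏_{j ∈ f⁻¹(k)} O_j), where for each k the product over the fiber f⁻¹(k) is taken in increasing order of j and equals the identity matrix when the fiber is empty (so an empty fiber contributes a factor Tr ρ). -/

import Mathlib

open scoped BigOperators

namespace Stmt1
noncomputable section

/-- `m`-fold Kronecker tensor power of a `d × d` matrix, realized on the index type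
`Fin m → Fin d`. -/
def kronPow {d : ℕ} (ρ : Matrix (Fin d) (Fin d) ℂ) (m : ℕ) :
    Matrix (Fin m → Fin d) (Fin m → Fin d) ℂ :=
  Matrix.of fun f g => ∏ l : Fin m, ρ (f l) (g l)

/-- `O` placed in the `j`-th tensor slot, identity elsewhere. -/
def emb {d m : ℕ} (j : Fin m) (O : Matrix (Fin d) (Fin d) ℂ) :
    Matrix (Fin m → Fin d) (Fin m → Fin d) ℂ :=
  Matrix.of fun f g =>
    O (f j) (g j) * ∏ l ∈ Finset.univ.erase j, (if f l = g l then (1 : ℂ) else 0)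

/-- The `m`-th degree Poisson quantization map `λ_m(O) = Σ_{j<m} emb_j O`
(in particular `λ_0(O) = 0`). -/
def lamDeg {d : ℕ} (m : ℕ) (O : Matrix (Fin d) (Fin d) ℂ) :
    Matrix (Fin m → Fin d) (Fin m → Fin d) ℂ :=
  ∑ j : Fin m, emb j O

/-- Ordered product of the matrices `O j`, `j ∈ A`, in increasing order of the index `j`;
the empty product is the identity. -/
def orderedProd {n d : ℕ} (O : Fin n → Matrix (Fin d) (Fin d) ℂ) (A : Finset (Fin n)) :
    Matrix (Fin d) (Fin d) ℂ :=
  ((A.sort (· ≤ ·)).map O).prod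

/-- tensor product of m matrices -/
def tOf {d m : ℕ} (P : Fin m → Matrix (Fin d) (Fin d) ℂ) :
    Matrix (Fin m → Fin d) (Fin m → Fin d) ℂ :=
  Matrix.of fun g h => ∏ k : Fin m, P k (g k) (h k)

lemma tOf_mul {d m : ℕ} (P Q : Fin m → Matrix (Fin d) (Fin d) ℂ) :
    tOf P * tOf Q = tOf (fun k => P k * Q k) := by
  ext g h
  simp only [tOf, Matrix.mul_apply, Matrix.of_apply]
  simp_rw [← Finset.prod_mul_distrib]
  rw [← Fintype.piFinset_univ]
  exact Finset.sum_prod_piFinset Finset.univ (fun k y => P k (g k) y * Q k y (h k))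

lemma tOf_trace {d m : ℕ} (P : Fin m → Matrix (Fin d) (Fin d) ℂ) :
    (tOf P).trace = ∏ k : Fin m, (P k).trace := by
  simp only [Matrix.trace, Matrix.diag, tOf, Matrix.of_apply]
  rw [← Fintype.piFinset_univ]
  exact Finset.sum_prod_piFinset Finset.univ (fun k y => P k y y)

lemma emb_eq {d m : ℕ} (j : Fin m) (O : Matrix (Fin d) (Fin d) ℂ) :
    emb j O = tOf (fun k => if k = j then O else 1) := by
  ext g h
  simp only [emb, tOf, Matrix.of_apply]
  rw [← Finset.mul_prod_erase (Finset.univ) _ (Finset.mem_univ j)]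
  simp only [if_pos rfl]
  congr 1
  apply Finset.prod_congr rfl
  intro k hk
  rw [if_neg (Finset.mem_erase.1 hk).1, Matrix.one_apply]

lemma sort_eq_filter {n : ℕ} (A : Finset (Fin n)) :
    A.sort (· ≤ ·) = (List.finRange n).filter (fun j => j ∈ A) := by
  refine List.Perm.eq_of_pairwise' (A.pairwise_sort _)
    (((List.pairwise_lt_finRange n).filter _).imp (fun h => le_of_lt h)) ?_
  refine (List.perm_ext_iff_of_nodup (A.sort_nodup _) ((List.nodup_finRange n).filter _)).2 ?_
  intro a
  simp [Finset.mem_sort, List.mem_filter]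

lemma orderedProd_cons {n d m : ℕ} (O : Fin (n+1) → Matrix (Fin d) (Fin d) ℂ)
    (j k : Fin m) (f : Fin n → Fin m) :
    orderedProd O (Finset.univ.filter (fun i => (Fin.cons j f : Fin (n+1) → Fin m) i = k))
      = (if j = k then O 0 else 1)
        * orderedProd (fun i => O i.succ) (Finset.univ.filter (fun i => f i = k)) := by
  rw [orderedProd, orderedProd, sort_eq_filter, sort_eq_filter, List.finRange_succ,
    List.filter_cons, List.filter_map]
  simp only [Finset.mem_filter, Finset.mem_univ, true_and, Fin.cons_zero, Fin.cons_succ,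
    Function.comp_def, decide_eq_true_eq]
  by_cases hj : j = k
  · simp [hj, List.map_map, Function.comp_def]
  · simp [hj, List.map_map, Function.comp_def]

lemma key {d m : ℕ} : ∀ (n : ℕ) (P : Fin m → Matrix (Fin d) (Fin d) ℂ)
    (O : Fin n → Matrix (Fin d) (Fin d) ℂ),
    (tOf P * (List.ofFn fun i => lamDeg m (O i)).prod).trace
      = ∑ f : Fin n → Fin m, ∏ k : Fin m,
          (P k * orderedProd O (Finset.univ.filter (fun j => f j = k))).trace := by
  intro n
  induction n with
  | zero =>
    intro P O
    simp only [List.ofFn_zero, List.prod_nil, mul_one, tOf_trace]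
    rw [Fintype.sum_unique]
    refine Finset.prod_congr rfl fun k _ => ?_
    have : (Finset.univ.filter (fun j : Fin 0 => (default : Fin 0 → Fin m) j = k)) = ∅ := by
      simp
    rw [this]
    simp [orderedProd]
  | succ n ih =>
    intro P O
    rw [List.ofFn_succ, List.prod_cons, ← mul_assoc]
    have h1 : tOf P * lamDeg m (O 0)
        = ∑ j : Fin m, tOf (fun k => P k * if j = k then O 0 else 1) := by
      rw [lamDeg, Finset.mul_sum]
      refine Finset.sum_congr rfl fun j _ => ?_
      rw [emb_eq, tOf_mul]
      congr 1
      funext k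
      congr 1
      simp [eq_comm]
    rw [h1, Finset.sum_mul, Matrix.trace_sum]
    simp_rw [ih]
    rw [← Equiv.sum_comp (Fin.consEquiv (fun _ : Fin (n+1) => Fin m)), Fintype.sum_prod_type]
    refine Finset.sum_congr rfl fun j _ => Finset.sum_congr rfl fun f _ => ?_
    refine Finset.prod_congr rfl fun k _ => ?_
    congr 1
    have : Fin.consEquiv (fun _ : Fin (n+1) => Fin m) (j, f) = Fin.cons j f := rfl
    rw [this, orderedProd_cons, mul_assoc]

/-- The fixed-degree Poisson moment formula: the trace of `ρ^{⊗m} λ_m(O 1) ⋯ λ_m(O n)`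
is a sum over all functions `f : Fin n → Fin m` of the product, over `k`, of
`Tr(ρ · Π_{j ∈ f⁻¹(k)} O j)` (an empty fiber contributing a factor `Tr ρ`). -/
theorem degree_m_moment_formula (d m n : ℕ) (hd : 1 ≤ d) (hn : 1 ≤ n)
    (ρ : Matrix (Fin d) (Fin d) ℂ) (O : Fin n → Matrix (Fin d) (Fin d) ℂ) :
    (kronPow ρ m * (List.ofFn fun i => lamDeg m (O i)).prod).trace
      = ∑ f : Fin n → Fin m, ∏ k : Fin m,
          (ρ * orderedProd O (Finset.univ.filter (fun j => f j = k))).trace := by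
  have h : kronPow ρ m = tOf (fun _ => ρ) := rfl
  rw [h, key n (fun _ => ρ) O]

end
end Stmt1
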